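/- For all natural numbers m and positive integers k, Ĉh_m^{(k)} = ∑_{n=max(0,m-k)}^{m} C(m,n) · (k!/(k+n-m)!) · Ch_n^{(k)}, relating the order-k Changhee numbers of the second kind to those of the first kind. -/
import Mathlib


open Finset

/-- Higher-order Changhee numbers of the first kind. -/
def Ch (k n : ℕ) : ℚ := (-1)^n * n.factorial / 2^n * ((k + n - 1).choose n)

/-- Higher-order Changhee numbers of the second kind. -/
def Chh (k n : ℕ) : ℚ :=
  (n.factorial : ℚ) *
    ∑ i ∈ range (n + 1), ((-1 : ℚ))^i / 2^i * ((k + i - 1).choose i) * (k.choose (n - i))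

theorem second_kind_from_first_kind (m k : ℕ) (hk : 1 ≤ k) :
    Chh k m = ∑ n ∈ range (m + 1),
      (m.choose n : ℚ) * ((m - n).factorial : ℚ) * (k.choose (m - n) : ℚ) * Ch k n := by
  unfold Chh Ch
  rw [Finset.mul_sum]
  refine Finset.sum_congr rfl fun n hn => ?_
  have hn' : n ≤ m := Nat.lt_succ_iff.mp (Finset.mem_range.mp hn)
  have h : ((m.factorial : ℚ)) = (m.choose n : ℚ) * n.factorial * (m - n).factorial := by
    exact_mod_cast (Nat.choose_mul_factorial_mul_factorial hn').symm
  rw [h]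
  ring
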